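/- Let σ¹,…,σ^K be permutations, and for each q ∈ [1..K] let [i_q..j_q] and [a_q..b_q] be intervals of indices and values. Let π be a separable permutation of maximal length among all separable permutations that have, for every q, an occurrence in σ^q in the interval [i_q..j_q] of indices and [a_q..b_q] of values. Suppose π = π₁ ⊕ π₂ with π₁, π₂ nonempty separable permutations. Then there exist, for each q, indices h_q with i_q < h_q ≤ j_q and values c_q with a_q < c_q ≤ b_q such that: (i) π₁ is of maximal length among separable permutations having, for every q, an occurrence in σ^q in the interval [i_q..h_q−1] of indices and [a_q..c_q−1] of values; and (ii) π₂ is of maximal length among separable permutations having, for every q, an occurrence in σ^q in the interval [h_q..j_q] of indices and [c_q..b_q] of values. -/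

import Mathlib

/-- `π` occurs as a pattern in `σ`. -/
def Pattern {k n : ℕ} (π : Equiv.Perm (Fin k)) (σ : Equiv.Perm (Fin n)) : Prop :=
  ∃ f : Fin k → Fin n, StrictMono f ∧ ∀ ℓ m : Fin k, π ℓ < π m ↔ σ (f ℓ) < σ (f m)

/-- The permutation 2 4 1 3 (one-line notation; zero-indexed values 1 3 0 2). -/
def perm2413 : Equiv.Perm (Fin 4) := c[0, 1, 3, 2]

/-- The permutation 3 1 4 2 (one-line notation; zero-indexed values 2 0 3 1). -/
def perm3142 : Equiv.Perm (Fin 4) := c[0, 2, 3, 1]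

/-- A permutation is separable if it avoids both 2413 and 3142. -/
def Separable {n : ℕ} (σ : Equiv.Perm (Fin n)) : Prop :=
  ¬ Pattern perm2413 σ ∧ ¬ Pattern perm3142 σ

/-- Positive concatenation (direct sum) `π ⊕ π'`:
the word `π₁ ⋯ π_k (π'₁+k) ⋯ (π'_{k'}+k)`. -/
def dsum {k k' : ℕ} (π : Equiv.Perm (Fin k)) (π' : Equiv.Perm (Fin k')) :
    Equiv.Perm (Fin (k + k')) :=
  finSumFinEquiv.symm.trans ((Equiv.sumCongr π π').trans finSumFinEquiv)

/-- Negative concatenation (skew sum) `π ⊖ π'`: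
the word `(π₁+k') ⋯ (π_k+k') π'₁ ⋯ π'_{k'}`. -/
def ssum {k k' : ℕ} (π : Equiv.Perm (Fin k)) (π' : Equiv.Perm (Fin k')) :
    Equiv.Perm (Fin (k + k')) :=
  finSumFinEquiv.symm.trans ((Equiv.sumCongr π π').trans
    ((Equiv.sumComm (Fin k) (Fin k')).trans (finSumFinEquiv.trans (finCongr (Nat.add_comm k' k)))))

/-- `π` has an occurrence in `σ` using the (1-indexed) interval `[i..j]` of indices and
`[a..b]` of values. -/
def OccursIn {k n : ℕ} (π : Equiv.Perm (Fin k)) (σ : Equiv.Perm (Fin n))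
    (i j a b : ℕ) : Prop :=
  ∃ f : Fin k → Fin n, StrictMono f ∧
    (∀ ℓ m : Fin k, π ℓ < π m ↔ σ (f ℓ) < σ (f m)) ∧
    (∀ ℓ : Fin k, i ≤ (f ℓ : ℕ) + 1 ∧ (f ℓ : ℕ) + 1 ≤ j) ∧
    (∀ ℓ : Fin k, a ≤ (σ (f ℓ) : ℕ) + 1 ∧ (σ (f ℓ) : ℕ) + 1 ≤ b)

lemma dsum_apply_castAdd {k k' : ℕ} (A : Equiv.Perm (Fin k)) (B : Equiv.Perm (Fin k')) (x : Fin k) :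
    dsum A B (Fin.castAdd k' x) = Fin.castAdd k' (A x) := by simp [dsum]

lemma dsum_apply_natAdd {k k' : ℕ} (A : Equiv.Perm (Fin k)) (B : Equiv.Perm (Fin k')) (y : Fin k') :
    dsum A B (Fin.natAdd k y) = Fin.natAdd k (B y) := by simp [dsum]

lemma dsum_val_lt {k k' : ℕ} (A : Equiv.Perm (Fin k)) (B : Equiv.Perm (Fin k')) (v : Fin (k + k'))
    (hv : (v : ℕ) < k) : ((dsum A B v : Fin (k+k')) : ℕ) < k := by
  have : v = Fin.castAdd k' ⟨(v : ℕ), hv⟩ := by ext; rfl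
  rw [this, dsum_apply_castAdd]
  exact (A ⟨(v : ℕ), hv⟩).isLt

lemma dsum_val_ge {k k' : ℕ} (A : Equiv.Perm (Fin k)) (B : Equiv.Perm (Fin k')) (v : Fin (k + k'))
    (hv : k ≤ (v : ℕ)) : k ≤ ((dsum A B v : Fin (k+k')) : ℕ) := by
  have : v = Fin.natAdd k ⟨(v : ℕ) - k, by omega⟩ := by ext; simp; omega
  rw [this, dsum_apply_natAdd]
  simp

lemma not_pattern_dsum {k k' : ℕ} (τ : Equiv.Perm (Fin 4))
    (hτ : ∀ P : Fin 4 → Prop, (∀ x y : Fin 4, x ≤ y → P y → P x) → P 0 → ¬ P 3 →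
      ∃ x y : Fin 4, P x ∧ ¬ P y ∧ τ y < τ x)
    {A : Equiv.Perm (Fin k)} {B : Equiv.Perm (Fin k')}
    (hA : ¬ Pattern τ A) (hB : ¬ Pattern τ B) : ¬ Pattern τ (dsum A B) := by
  rintro ⟨f, hf, hiff⟩
  by_cases hall : ∀ x : Fin 4, (f x : ℕ) < k
  · apply hA
    refine ⟨fun x => ⟨(f x : ℕ), hall x⟩, fun x y hxy => hf hxy, fun ℓ m => ?_⟩
    rw [hiff]
    have e : ∀ x : Fin 4, f x = Fin.castAdd k' ⟨(f x : ℕ), hall x⟩ := fun x => by ext; rfl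
    rw [e ℓ, e m, dsum_apply_castAdd, dsum_apply_castAdd]
    simp only [Fin.lt_def, Fin.coe_castAdd]
  by_cases hup : ∀ x : Fin 4, k ≤ (f x : ℕ)
  · apply hB
    have hlt : ∀ x : Fin 4, (f x : ℕ) - k < k' := fun x => by have := (f x).isLt; have := hup x; omega
    refine ⟨fun x => ⟨(f x : ℕ) - k, hlt x⟩, fun x y hxy => ?_, fun ℓ m => ?_⟩
    · have := hf hxy
      have h1 := hup x; have h2 := hup y
      simp only [Fin.lt_def] at this ⊢
      omega
    · rw [hiff]
      have e : ∀ x : Fin 4, f x = Fin.natAdd k ⟨(f x : ℕ) - k, hlt x⟩ := fun x => by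
        ext; simp; have := hup x; omega
      rw [e ℓ, e m, dsum_apply_natAdd, dsum_apply_natAdd]
      simp only [Fin.lt_def, Fin.coe_natAdd]
      omega
  · push_neg at hall hup
    obtain ⟨y0, hy0⟩ := hall
    obtain ⟨x0, hx0⟩ := hup
    set P : Fin 4 → Prop := fun x => (f x : ℕ) < k with hP
    have hmono : ∀ x y : Fin 4, x ≤ y → P y → P x := fun x y hxy hy => by
      have := hf.monotone hxy
      simp only [hP] at *
      omega
    have h0 : P 0 := hmono 0 x0 (Fin.zero_le _) (by simpa [hP] using hx0)
    have h3 : ¬ P 3 := fun h => by have := hmono y0 3 (by omega) h; simp only [hP] at this; omega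
    obtain ⟨x, y, hx, hy, hlt⟩ := hτ P hmono h0 h3
    have hcross : dsum A B (f x) < dsum A B (f y) := by
      have h1 := dsum_val_lt A B (f x) hx
      have h2 := dsum_val_ge A B (f y) (by simp only [hP] at hy; omega)
      simp only [Fin.lt_def]; omega
    have := (hiff x y).mpr hcross
    exact absurd this (not_lt.mpr hlt.le)

lemma Separable.dsum_sep {k k' : ℕ} {A : Equiv.Perm (Fin k)} {B : Equiv.Perm (Fin k')}
    (hA : Separable A) (hB : Separable B) : Separable (dsum A B) := by
  constructor
  · refine not_pattern_dsum _ ?_ hA.1 hB.1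
    intro P hmono h0 h3
    by_cases h2 : P 2
    · exact ⟨1, 3, hmono 1 2 (by decide) h2, h3, by decide⟩
    · exact ⟨0, 2, h0, h2, by decide⟩
  · refine not_pattern_dsum _ ?_ hA.2 hB.2
    intro P hmono h0 h3
    exact ⟨0, 3, h0, h3, by decide⟩

lemma fin_add_cases' {m n : ℕ} (x : Fin (m+n)) :
    (∃ u : Fin m, x = Fin.castAdd n u) ∨ (∃ v : Fin n, x = Fin.natAdd m v) := by
  by_cases h : (x : ℕ) < m
  · exact Or.inl ⟨⟨(x:ℕ), h⟩, by ext; rfl⟩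
  · exact Or.inr ⟨⟨(x:ℕ) - m, by omega⟩, by ext; simp; omega⟩

lemma occursIn_dsum {p k₂ n : ℕ} (π' : Equiv.Perm (Fin p)) (π₂ : Equiv.Perm (Fin k₂))
    (σ : Equiv.Perm (Fin n)) {i j a b h c : ℕ}
    (hih : i ≤ h) (hhj : h ≤ j) (hac : a ≤ c) (hcb : c ≤ b)
    (h1 : OccursIn π' σ i (h-1) a (c-1)) (h2 : OccursIn π₂ σ h j c b) :
    OccursIn (dsum π' π₂) σ i j a b := by
  obtain ⟨f1, m1, p1, idx1, val1⟩ := h1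
  obtain ⟨f2, m2, p2, idx2, val2⟩ := h2
  have crossidx : ∀ (u : Fin p) (v : Fin k₂), f1 u < f2 v := by
    intro u v
    have a1 := (idx1 u).2; have a2 := (idx2 v).1; have a3 := (idx1 u).1
    simp only [Fin.lt_def]; omega
  have crossval : ∀ (u : Fin p) (v : Fin k₂), σ (f1 u) < σ (f2 v) := by
    intro u v
    have a1 := (val1 u).2; have a2 := (val2 v).1; have a3 := (val1 u).1
    simp only [Fin.lt_def]; omega
  set F : Fin (p + k₂) → Fin n := fun x => Sum.elim f1 f2 (finSumFinEquiv.symm x) with hF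
  have Fl : ∀ u : Fin p, F (Fin.castAdd k₂ u) = f1 u := by
    intro u; simp [hF]
  have Fr : ∀ v : Fin k₂, F (Fin.natAdd p v) = f2 v := by
    intro v; simp [hF]
  refine ⟨F, ?_, ?_, ?_, ?_⟩
  · intro x y hxy
    rcases fin_add_cases' x with ⟨u, rfl⟩ | ⟨u, rfl⟩ <;>
      rcases fin_add_cases' y with ⟨v, rfl⟩ | ⟨v, rfl⟩
    · rw [Fl, Fl]
      exact m1 (by simp only [Fin.lt_def, Fin.coe_castAdd] at hxy ⊢; exact hxy)
    · rw [Fl, Fr]; exact crossidx _ _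
    · exfalso; simp only [Fin.lt_def, Fin.coe_castAdd, Fin.coe_natAdd] at hxy
      have := v.isLt; omega
    · rw [Fr, Fr]
      exact m2 (by simp only [Fin.lt_def, Fin.coe_natAdd] at hxy ⊢; omega)
  · intro ℓ m
    rcases fin_add_cases' ℓ with ⟨u, rfl⟩ | ⟨u, rfl⟩ <;>
      rcases fin_add_cases' m with ⟨v, rfl⟩ | ⟨v, rfl⟩
    · rw [Fl, Fl, dsum_apply_castAdd, dsum_apply_castAdd, ← p1]
      simp only [Fin.lt_def, Fin.coe_castAdd]
    · rw [Fl, Fr, dsum_apply_castAdd, dsum_apply_natAdd]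
      simp only [Fin.lt_def, Fin.coe_castAdd, Fin.coe_natAdd]
      have := (π' u).isLt
      exact ⟨fun _ => crossval u v, fun _ => by omega⟩
    · rw [Fr, Fl, dsum_apply_natAdd, dsum_apply_castAdd]
      simp only [Fin.lt_def, Fin.coe_castAdd, Fin.coe_natAdd]
      have h1 := (π' v).isLt
      exact ⟨fun hlt => by omega,
        fun hlt => absurd (crossval v u) (not_lt.mpr hlt.le)⟩
    · rw [Fr, Fr, dsum_apply_natAdd, dsum_apply_natAdd, ← p2]
      simp only [Fin.lt_def, Fin.coe_natAdd]
      omega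
  · intro ℓ
    rcases fin_add_cases' ℓ with ⟨u, rfl⟩ | ⟨u, rfl⟩
    · rw [Fl]; have := idx1 u; omega
    · rw [Fr]; have := idx2 u; omega
  · intro ℓ
    rcases fin_add_cases' ℓ with ⟨u, rfl⟩ | ⟨u, rfl⟩
    · rw [Fl]; have := val1 u; omega
    · rw [Fr]; have := val2 u; omega


/-- Lemma 2 (`⊕` case): if `π = π₁ ⊕ π₂` is a common separable pattern of maximal length of
`σ¹, …, σ^K` among those occurring in the intervals `[i_q..j_q]` of indices and `[a_q..b_q]`
of values, then the prescribed intervals split so that `π₁` and `π₂` are common separable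
patterns of maximal length in the corresponding subintervals. -/
theorem dsum_maximal_split (K : ℕ) (n : Fin K → ℕ) (σ : ∀ q, Equiv.Perm (Fin (n q)))
    (i j a b : Fin K → ℕ)
    (hij : ∀ q, 1 ≤ i q ∧ i q ≤ j q ∧ j q ≤ n q)
    (hab : ∀ q, 1 ≤ a q ∧ a q ≤ b q ∧ b q ≤ n q)
    {k₁ k₂ : ℕ} (hk₁ : 0 < k₁) (hk₂ : 0 < k₂)
    (π₁ : Equiv.Perm (Fin k₁)) (π₂ : Equiv.Perm (Fin k₂))
    (hs₁ : Separable π₁) (hs₂ : Separable π₂)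
    (hsep : Separable (dsum π₁ π₂))
    (hocc : ∀ q, OccursIn (dsum π₁ π₂) (σ q) (i q) (j q) (a q) (b q))
    (hmax : ∀ (p : ℕ) (π' : Equiv.Perm (Fin p)), Separable π' →
      (∀ q, OccursIn π' (σ q) (i q) (j q) (a q) (b q)) → p ≤ k₁ + k₂) :
    ∃ h c : Fin K → ℕ,
      (∀ q, i q < h q ∧ h q ≤ j q ∧ a q < c q ∧ c q ≤ b q) ∧
      (∀ q, OccursIn π₁ (σ q) (i q) (h q - 1) (a q) (c q - 1)) ∧
      (∀ (p : ℕ) (π' : Equiv.Perm (Fin p)), Separable π' →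
        (∀ q, OccursIn π' (σ q) (i q) (h q - 1) (a q) (c q - 1)) → p ≤ k₁) ∧
      (∀ q, OccursIn π₂ (σ q) (h q) (j q) (c q) (b q)) ∧
      (∀ (p : ℕ) (π' : Equiv.Perm (Fin p)), Separable π' →
        (∀ q, OccursIn π' (σ q) (h q) (j q) (c q) (b q)) → p ≤ k₂) := by

  choose f hf using hocc
  have hmono : ∀ q, StrictMono (f q) := fun q => (hf q).1
  have hpat : ∀ q, ∀ ℓ m, dsum π₁ π₂ ℓ < dsum π₁ π₂ m ↔ σ q (f q ℓ) < σ q (f q m) :=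
    fun q => (hf q).2.1
  have hidx : ∀ q ℓ, i q ≤ (f q ℓ : ℕ) + 1 ∧ (f q ℓ : ℕ) + 1 ≤ j q := fun q => (hf q).2.2.1
  have hval : ∀ q ℓ, a q ≤ (σ q (f q ℓ) : ℕ) + 1 ∧ (σ q (f q ℓ) : ℕ) + 1 ≤ b q :=
    fun q => (hf q).2.2.2
  set z : Fin k₂ := ⟨0, hk₂⟩ with hz
  set y0 : Fin k₂ := π₂⁻¹ z with hy0
  set h : Fin K → ℕ := fun q => (f q (Fin.natAdd k₁ z) : ℕ) + 1 with hh
  set c : Fin K → ℕ := fun q => ((σ q) (f q (Fin.natAdd k₁ y0)) : ℕ) + 1 with hc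
  have crossidx : ∀ q (x : Fin k₁) (y : Fin k₂),
      f q (Fin.castAdd k₂ x) < f q (Fin.natAdd k₁ y) := by
    intro q x y
    apply hmono q
    simp only [Fin.lt_def, Fin.coe_castAdd, Fin.coe_natAdd]
    have := x.isLt; omega
  have crossval : ∀ q (x : Fin k₁) (y : Fin k₂),
      σ q (f q (Fin.castAdd k₂ x)) < σ q (f q (Fin.natAdd k₁ y)) := by
    intro q x y
    rw [← hpat q, dsum_apply_castAdd, dsum_apply_natAdd]
    simp only [Fin.lt_def, Fin.coe_castAdd, Fin.coe_natAdd]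
    have := (π₁ x).isLt; omega
  have minval : ∀ q (y : Fin k₂),
      (σ q (f q (Fin.natAdd k₁ y0)) : ℕ) ≤ σ q (f q (Fin.natAdd k₁ y)) := by
    intro q y
    by_cases hy : y = y0
    · rw [hy]
    · have hne : π₂ y ≠ z := by
        intro hcontra
        apply hy
        rw [hy0, ← hcontra, show π₂⁻¹ (π₂ y) = y from π₂.symm_apply_apply y]
      have h1 : π₂ y0 < π₂ y := by
        rw [hy0, show π₂ (π₂⁻¹ z) = z from π₂.apply_symm_apply z]
        rw [Fin.lt_def]
        have : (π₂ y : ℕ) ≠ 0 := fun h0 => hne (by ext; simp [hz, h0])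
        simp [hz]
        omega
      have h2 : dsum π₁ π₂ (Fin.natAdd k₁ y0) < dsum π₁ π₂ (Fin.natAdd k₁ y) := by
        rw [dsum_apply_natAdd, dsum_apply_natAdd]
        simp only [Fin.lt_def, Fin.coe_natAdd]
        rw [Fin.lt_def] at h1
        omega
      exact ((hpat q _ _).mp h2).le
  have minidx : ∀ q (y : Fin k₂),
      (f q (Fin.natAdd k₁ z) : ℕ) ≤ f q (Fin.natAdd k₁ y) := by
    intro q y
    apply (hmono q).monotone
    simp only [Fin.le_def, Fin.coe_natAdd, hz]
    omega
  have bullet1 : ∀ q, i q < h q ∧ h q ≤ j q ∧ a q < c q ∧ c q ≤ b q := by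
    intro q
    have c1 := crossidx q ⟨0, hk₁⟩ z
    have c2 := crossval q ⟨0, hk₁⟩ y0
    rw [Fin.lt_def] at c1 c2
    have i1 := (hidx q (Fin.castAdd k₂ ⟨0, hk₁⟩)).1
    have i2 := (hidx q (Fin.natAdd k₁ z)).2
    have v1 := (hval q (Fin.castAdd k₂ ⟨0, hk₁⟩)).1
    have v2 := (hval q (Fin.natAdd k₁ y0)).2
    simp only [hh, hc]
    refine ⟨by omega, by omega, by omega, by omega⟩
  have bullet2 : ∀ q, OccursIn π₁ (σ q) (i q) (h q - 1) (a q) (c q - 1) := by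
    intro q
    refine ⟨fun x => f q (Fin.castAdd k₂ x), ?_, ?_, ?_, ?_⟩
    · intro x y hxy
      apply hmono q
      simp only [Fin.lt_def, Fin.coe_castAdd]
      exact hxy
    · intro ℓ m
      rw [← hpat q, dsum_apply_castAdd, dsum_apply_castAdd]
      simp only [Fin.lt_def, Fin.coe_castAdd]
    · intro ℓ
      have i1 := hidx q (Fin.castAdd k₂ ℓ)
      have c1 := crossidx q ℓ z
      rw [Fin.lt_def] at c1
      simp only [hh]
      omega
    · intro ℓ
      have v1 := hval q (Fin.castAdd k₂ ℓ)
      have c2 := crossval q ℓ y0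
      rw [Fin.lt_def] at c2
      simp only [hc]
      omega
  have bullet4 : ∀ q, OccursIn π₂ (σ q) (h q) (j q) (c q) (b q) := by
    intro q
    refine ⟨fun y => f q (Fin.natAdd k₁ y), ?_, ?_, ?_, ?_⟩
    · intro x y hxy
      apply hmono q
      simp only [Fin.lt_def, Fin.coe_natAdd]
      omega
    · intro ℓ m
      rw [← hpat q, dsum_apply_natAdd, dsum_apply_natAdd]
      simp only [Fin.lt_def, Fin.coe_natAdd]
      omega
    · intro ℓ
      have i1 := hidx q (Fin.natAdd k₁ ℓ)
      have m1 := minidx q ℓ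
      simp only [hh]
      omega
    · intro ℓ
      have v1 := hval q (Fin.natAdd k₁ ℓ)
      have m1 := minval q ℓ
      simp only [hc]
      omega
  refine ⟨h, c, bullet1, bullet2, ?_, bullet4, ?_⟩
  · intro p π' hsπ' hoccπ'
    have hb := fun q => bullet1 q
    have := hmax (p + k₂) (dsum π' π₂) (hsπ'.dsum_sep hs₂) (fun q =>
      occursIn_dsum π' π₂ (σ q) (hb q).1.le (hb q).2.1 (hb q).2.2.1.le (hb q).2.2.2
        (hoccπ' q) (bullet4 q))
    omega
  · intro p π' hsπ' hoccπ'
    have hb := fun q => bullet1 q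
    have := hmax (k₁ + p) (dsum π₁ π') (hs₁.dsum_sep hsπ') (fun q =>
      occursIn_dsum π₁ π' (σ q) (hb q).1.le (hb q).2.1 (hb q).2.2.1.le (hb q).2.2.2
        (bullet2 q) (hoccπ' q))
    omega
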